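/- arXiv:1102.3540 — 5 statements merged into one kernel-verified Lean document; each statement's English description precedes it below -/
import Mathlib

section
/- For 0 < p < q ≤ ∞ and any positive integer n < m, the thresholding operator P_n on ℓ_p^m defined by P_n(x) = ∑_{j=1}^n (x_{k_j} − |x_{k_{n+1}}| · sign(x_{k_j})) e_{k_j}, where the indices k_1,…,k_m order the coordinates so that |x_{k_1}| ≥ |x_{k_2}| ≥ … ≥ |x_{k_m}|, satisfies sup_{x ∈ B_p^m} ‖x − P_n(x)‖_{ℓ_q^m} ≤ n^{1/q − 1/p}. -/
open MeasureTheory ENNReal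

/-- The `ℓ_q^m` quasi-norm on `ℝ^m`, realized as the `L_q` norm with respect to
counting measure (so `q = ∞` gives the max norm). -/
noncomputable def lqNorm {m : ℕ} (q : ℝ≥0∞) (x : Fin m → ℝ) : ℝ≥0∞ :=
  eLpNorm x q Measure.count

/-- Soft thresholding `P_n` keeping the `n` largest coordinates (given by an ordering
permutation `σ`) soft-thresholded at the `(n+1)`-st largest absolute value satisfies
`‖x - P_n x‖_{ℓ_q^m} ≤ n^{1/q - 1/p}` on the unit ball of `ℓ_p^m`, for `0 < p < q ≤ ∞`. -/
theorem soft_threshold_error_bound {m n : ℕ} (hn : 0 < n) (hnm : n < m)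
    (p q : ℝ≥0∞) (hp : 0 < p) (hpq : p < q)
    (x : Fin m → ℝ) (hx : lqNorm p x ≤ 1)
    (σ : Equiv.Perm (Fin m)) (hσ : Antitone fun j => |x (σ j)|) :
    lqNorm q
      (x - fun i =>
        if ((σ.symm i : ℕ)) < n then x i - |x (σ ⟨n, hnm⟩)| * Real.sign (x i) else 0)
      ≤ (n : ℝ≥0∞) ^ (1 / q.toReal - 1 / p.toReal) := by
  have hpt : p ≠ ∞ := (hpq.trans_le le_top).ne
  have hp0 : p ≠ 0 := hp.ne'
  set pr := p.toReal with hprdef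
  have hpr : 0 < pr := ENNReal.toReal_pos hp0 hpt
  set t : ℝ := |x (σ ⟨n, hnm⟩)| with htdef
  set T : ℝ≥0∞ := (‖x (σ ⟨n, hnm⟩)‖₊ : ℝ≥0∞) with hTdef
  set r : Fin m → ℝ := (x - fun i =>
      if ((σ.symm i : ℕ)) < n then x i - |x (σ ⟨n, hnm⟩)| * Real.sign (x i) else 0) with hrdef
  -- pointwise bounds
  have habs : ∀ i, |r i| ≤ t ∧ |r i| ≤ |x i| := by
    intro i
    by_cases c : ((σ.symm i : ℕ)) < n
    · have hri : r i = t * Real.sign (x i) := by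
        simp [hrdef, c, htdef]
      have ht0 : 0 ≤ t := abs_nonneg _
      rcases eq_or_ne (x i) 0 with h0 | h0
      · simp [hri, h0, ht0, abs_nonneg]
      · have hs : |Real.sign (x i)| = 1 := by
          rcases h0.lt_or_gt with h | h
          · simp [Real.sign_of_neg h]
          · simp [Real.sign_of_pos h]
        have hle : t ≤ |x i| := by
          have := hσ (a := σ.symm i) (b := ⟨n, hnm⟩) (by
            simpa [Fin.le_def] using c.le)
          simpa [htdef] using this
        constructor
        · rw [hri, abs_mul, hs, mul_one, abs_of_nonneg ht0]
        · rw [hri, abs_mul, hs, mul_one, abs_of_nonneg ht0]; exact hle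
    · have hri : r i = x i := by simp [hrdef, c]
      have hle : |x i| ≤ t := by
        have := hσ (a := (⟨n, hnm⟩ : Fin m)) (b := σ.symm i) (by
          simpa [Fin.le_def] using not_lt.mp c)
        simpa [htdef] using this
      exact ⟨by rwa [hri], by rw [hri]⟩
  have hr1 : ∀ i, (‖r i‖₊ : ℝ≥0∞) ≤ T := by
    intro i
    rw [hTdef, ENNReal.coe_le_coe, ← NNReal.coe_le_coe]
    simpa [Real.norm_eq_abs, htdef] using (habs i).1
  have hr2 : ∀ i, (‖r i‖₊ : ℝ≥0∞) ≤ (‖x i‖₊ : ℝ≥0∞) := by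
    intro i
    rw [ENNReal.coe_le_coe, ← NNReal.coe_le_coe]
    simpa [Real.norm_eq_abs] using (habs i).2
  -- the p-sum bound
  have hsum : ∑ i : Fin m, (‖x i‖₊ : ℝ≥0∞) ^ pr ≤ 1 := by
    have h := hx
    rw [lqNorm, eLpNorm_eq_lintegral_rpow_enorm_toReal hp0 hpt, lintegral_count, tsum_fintype] at h
    have h2 := ENNReal.rpow_le_rpow h hpr.le
    rwa [← ENNReal.rpow_mul, one_div_mul_cancel hpr.ne', ENNReal.rpow_one,
      ENNReal.one_rpow] at h2
  -- n * T^pr ≤ 1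
  have hTn : (n : ℝ≥0∞) * T ^ pr ≤ 1 := by
    have key : (n : ℝ≥0∞) * T ^ pr ≤ ∑ j : Fin m, (‖x (σ j)‖₊ : ℝ≥0∞) ^ pr := by
      have h1 : (n : ℝ≥0∞) * T ^ pr = ∑ _k : Fin n, T ^ pr := by
        simp [Finset.sum_const, nsmul_eq_mul]
      rw [h1]
      have h2 : ∀ k : Fin n, T ^ pr ≤ (‖x (σ (Fin.castLE hnm.le k))‖₊ : ℝ≥0∞) ^ pr := by
        intro k
        apply ENNReal.rpow_le_rpow _ hpr.le
        rw [hTdef, ENNReal.coe_le_coe, ← NNReal.coe_le_coe]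
        have := hσ (a := Fin.castLE hnm.le k) (b := ⟨n, hnm⟩) (by
          simpa [Fin.le_def] using k.isLt.le)
        simpa [Real.norm_eq_abs] using this
      calc ∑ _k : Fin n, T ^ pr ≤ ∑ k : Fin n, (‖x (σ (Fin.castLE hnm.le k))‖₊ : ℝ≥0∞) ^ pr :=
            Finset.sum_le_sum fun k _ => h2 k
        _ = ∑ j ∈ Finset.univ.map ⟨Fin.castLE hnm.le, Fin.castLE_injective _⟩,
              (‖x (σ j)‖₊ : ℝ≥0∞) ^ pr := by rw [Finset.sum_map]; rfl
        _ ≤ ∑ j : Fin m, (‖x (σ j)‖₊ : ℝ≥0∞) ^ pr :=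
            Finset.sum_le_sum_of_subset (Finset.subset_univ _)
    calc (n : ℝ≥0∞) * T ^ pr ≤ ∑ j : Fin m, (‖x (σ j)‖₊ : ℝ≥0∞) ^ pr := key
      _ = ∑ i : Fin m, (‖x i‖₊ : ℝ≥0∞) ^ pr := Equiv.sum_comp σ (fun i => (‖x i‖₊ : ℝ≥0∞) ^ pr)
      _ ≤ 1 := hsum
  have hn0 : (n : ℝ≥0∞) ≠ 0 := Nat.cast_ne_zero.mpr hn.ne'
  have hnt : (n : ℝ≥0∞) ≠ ∞ := ENNReal.natCast_ne_top n
  have hTp : T ^ pr ≤ (n : ℝ≥0∞)⁻¹ := by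
    rw [mul_comm] at hTn
    rw [← ENNReal.le_div_iff_mul_le (Or.inl hn0) (Or.inl hnt), one_div] at hTn
    exact hTn
  have hT : T ≤ (n : ℝ≥0∞) ^ (-(1 / pr)) := by
    have := ENNReal.rpow_le_rpow hTp (le_of_lt (by positivity : (0:ℝ) < 1 / pr))
    rw [← ENNReal.rpow_mul, mul_one_div_cancel hpr.ne', ENNReal.rpow_one] at this
    calc T ≤ ((n : ℝ≥0∞)⁻¹) ^ (1 / pr) := this
      _ = (n : ℝ≥0∞) ^ (-(1 / pr)) := by
          rw [← ENNReal.rpow_neg_one, ← ENNReal.rpow_mul]; ring_nf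
  rcases eq_or_ne q ∞ with hq | hq
  · subst hq
    rw [lqNorm, eLpNorm_exponent_top]
    have hbd : eLpNormEssSup r Measure.count ≤ T :=
      eLpNormEssSup_le_of_ae_nnnorm_bound (Filter.Eventually.of_forall fun i => by
        have := hr1 i; rwa [hTdef, ENNReal.coe_le_coe] at this)
    refine hbd.trans (hT.trans (le_of_eq ?_))
    norm_num
  · have hq0 : q ≠ 0 := (hp.trans hpq).ne'
    set qr := q.toReal with hqrdef
    have hqr : 0 < qr := ENNReal.toReal_pos hq0 hq
    have hpqr : pr < qr := (ENNReal.toReal_lt_toReal hpt hq).mpr hpq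
    rw [lqNorm, eLpNorm_eq_lintegral_rpow_enorm_toReal hq0 hq, lintegral_count, tsum_fintype]
    have hterm : ∀ i : Fin m, (‖r i‖₊ : ℝ≥0∞) ^ qr ≤ T ^ (qr - pr) * (‖x i‖₊ : ℝ≥0∞) ^ pr := by
      intro i
      rcases eq_or_ne (‖r i‖₊ : ℝ≥0∞) 0 with h0 | h0
      · rw [h0, ENNReal.zero_rpow_of_pos hqr]; exact zero_le
      · have : (‖r i‖₊ : ℝ≥0∞) ^ qr = (‖r i‖₊ : ℝ≥0∞) ^ (qr - pr) * (‖r i‖₊ : ℝ≥0∞) ^ pr := by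
          rw [← ENNReal.rpow_add _ _ h0 ENNReal.coe_ne_top]; ring_nf
        rw [this]
        exact mul_le_mul' (ENNReal.rpow_le_rpow (hr1 i) (by linarith))
          (ENNReal.rpow_le_rpow (hr2 i) hpr.le)
    have hS : ∑ i : Fin m, (‖r i‖₊ : ℝ≥0∞) ^ qr ≤ T ^ (qr - pr) := by
      calc ∑ i : Fin m, (‖r i‖₊ : ℝ≥0∞) ^ qr
          ≤ ∑ i : Fin m, T ^ (qr - pr) * (‖x i‖₊ : ℝ≥0∞) ^ pr :=
            Finset.sum_le_sum fun i _ => hterm i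
        _ = T ^ (qr - pr) * ∑ i : Fin m, (‖x i‖₊ : ℝ≥0∞) ^ pr := by rw [Finset.mul_sum]
        _ ≤ T ^ (qr - pr) * 1 := mul_le_mul_right hsum _
        _ = T ^ (qr - pr) := mul_one _
    have hS2 : ∑ i : Fin m, (‖r i‖₊ : ℝ≥0∞) ^ qr ≤ (n : ℝ≥0∞) ^ (-(1 / pr) * (qr - pr)) := by
      refine hS.trans ?_
      calc T ^ (qr - pr) ≤ ((n : ℝ≥0∞) ^ (-(1 / pr))) ^ (qr - pr) :=
            ENNReal.rpow_le_rpow hT (by linarith)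
        _ = (n : ℝ≥0∞) ^ (-(1 / pr) * (qr - pr)) := (ENNReal.rpow_mul _ _ _).symm
    calc (∑ i : Fin m, (‖r i‖₊ : ℝ≥0∞) ^ qr) ^ (1 / qr)
        ≤ ((n : ℝ≥0∞) ^ (-(1 / pr) * (qr - pr))) ^ (1 / qr) :=
          ENNReal.rpow_le_rpow hS2 (by positivity)
      _ = (n : ℝ≥0∞) ^ (1 / qr - 1 / pr) := by
          rw [← ENNReal.rpow_mul]
          congr 1
          field_simp
          ring_nf
end

section
/- For 0 < p, q ≤ ∞ and any positive integer n < m, the soft-thresholding operator P_n is a continuous map from ℓ_p^m to ℓ_q^m. -/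
open Classical ENNReal

/-- The `(n+1)`-st largest absolute value of the coordinates of `x`: the least
nonnegative threshold `t` such that at most `n` coordinates exceed `t` in absolute value. -/
noncomputable def thresh {m : ℕ} (n : ℕ) (x : Fin m → ℝ) : ℝ :=
  sInf {t : ℝ | 0 ≤ t ∧ (Finset.univ.filter fun i => t < |x i|).card ≤ n}

/-- The soft-thresholding `n`-term operator `P_n` on `ℝ^m`: each coordinate is
soft-thresholded at the `(n+1)`-st largest absolute value, which keeps (at most)
the `n` largest coordinates. -/
noncomputable def softThr {m : ℕ} (n : ℕ) (x : Fin m → ℝ) : Fin m → ℝ :=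
  fun i => Real.sign (x i) * max (|x i| - thresh n x) 0

namespace SoftThrAux

variable {m n : ℕ}

lemma pcard_nonempty (hnm : n < m) :
    (Finset.powersetCard (n+1) (Finset.univ : Finset (Fin m))).Nonempty := by
  rw [Finset.powersetCard_nonempty]
  simpa using hnm

lemma mem_nonempty {S : Finset (Fin m)}
    (hS : S ∈ Finset.powersetCard (n+1) (Finset.univ : Finset (Fin m))) : S.Nonempty := by
  rw [Finset.mem_powersetCard] at hS
  exact Finset.card_pos.mp (hS.2 ▸ n.succ_pos)

/-- The `(n+1)`-st largest absolute value, as a max-min: max over subsets `S` of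
cardinality `n+1` of the min of `|x i|` over `S`. -/
noncomputable def kmax (n : ℕ) (hnm : n < m) (x : Fin m → ℝ) : ℝ :=
  ((Finset.powersetCard (n+1) (Finset.univ : Finset (Fin m))).attach).sup'
    (Finset.attach_nonempty_iff.mpr (pcard_nonempty hnm))
    fun S => (S.1).inf' (mem_nonempty S.2) fun i => |x i|

lemma kmax_nonneg (hnm : n < m) (x : Fin m → ℝ) : 0 ≤ kmax n hnm x := by
  obtain ⟨S, hS⟩ := pcard_nonempty hnm
  refine le_trans ?_ (Finset.le_sup' _ (Finset.mem_attach _ ⟨S, hS⟩))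
  exact Finset.le_inf' _ _ fun i _ => abs_nonneg _

lemma card_filter_kmax_le (hnm : n < m) (x : Fin m → ℝ) :
    (Finset.univ.filter fun i => kmax n hnm x < |x i|).card ≤ n := by
  by_contra h
  push_neg at h
  obtain ⟨S, hSsub, hScard⟩ := Finset.exists_subset_card_eq
    (s := Finset.univ.filter fun i => kmax n hnm x < |x i|) (n := n+1) h
  have hSmem : S ∈ Finset.powersetCard (n+1) (Finset.univ : Finset (Fin m)) := by
    rw [Finset.mem_powersetCard]
    exact ⟨Finset.subset_univ _, hScard⟩
  have h1 : kmax n hnm x < S.inf' (mem_nonempty hSmem) fun i => |x i| := by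
    rw [Finset.lt_inf'_iff]
    intro i hi
    have := hSsub hi
    simpa using (Finset.mem_filter.mp this).2
  have h2 : (S.inf' (mem_nonempty hSmem) fun i => |x i|) ≤ kmax n hnm x := by
    exact Finset.le_sup'
      (f := fun T : {T // T ∈ Finset.powersetCard (n+1) (Finset.univ : Finset (Fin m))} =>
        (T.1).inf' (mem_nonempty T.2) fun i => |x i|)
      (Finset.mem_attach _ ⟨S, hSmem⟩)
  exact absurd (lt_of_lt_of_le h1 h2) (lt_irrefl _)

lemma le_of_mem (hnm : n < m) (x : Fin m → ℝ) {t : ℝ}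
    (ht : (Finset.univ.filter fun i => t < |x i|).card ≤ n) : kmax n hnm x ≤ t := by
  refine Finset.sup'_le _ _ fun S _ => ?_
  have hS := S.2
  rw [Finset.mem_powersetCard] at hS
  have : ¬ (S.1 ⊆ Finset.univ.filter fun i => t < |x i|) := by
    intro hsub
    have := Finset.card_le_card hsub
    omega
  obtain ⟨i, hiS, hif⟩ := Finset.not_subset.mp this
  have : ¬ t < |x i| := by simpa using hif
  exact le_trans (Finset.inf'_le _ hiS) (le_of_not_gt this)

lemma thresh_eq_kmax (hnm : n < m) (x : Fin m → ℝ) : thresh n x = kmax n hnm x := by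
  have hset : {t : ℝ | 0 ≤ t ∧ (Finset.univ.filter fun i => t < |x i|).card ≤ n}
      = Set.Ici (kmax n hnm x) := by
    ext t
    simp only [Set.mem_setOf_eq, Set.mem_Ici]
    constructor
    · rintro ⟨_, ht⟩
      exact le_of_mem hnm x ht
    · intro ht
      refine ⟨le_trans (kmax_nonneg hnm x) ht, le_trans (Finset.card_le_card fun i hi => ?_)
        (card_filter_kmax_le hnm x)⟩
      simp only [Finset.mem_filter] at hi ⊢
      exact ⟨hi.1, lt_of_le_of_lt ht hi.2⟩
  rw [thresh, hset, csInf_Ici]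

lemma kmax_continuous (hnm : n < m) : Continuous (kmax n hnm : (Fin m → ℝ) → ℝ) := by
  apply Continuous.finset_sup'_apply
  intro S _
  exact Continuous.finset_inf'_apply _ fun i _ => (continuous_apply i).abs

lemma soft_eq (t y : ℝ) (ht : 0 ≤ t) :
    Real.sign y * max (|y| - t) 0 = max (y - t) 0 + min (y + t) 0 := by
  rcases lt_trichotomy y 0 with hy | hy | hy
  · rw [Real.sign_of_neg hy, abs_of_neg hy]
    rcases le_total (y + t) 0 with h | h
    · rw [max_eq_left (by linarith), max_eq_right (by linarith), min_eq_left h]; ring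
    · rw [max_eq_right (by linarith), max_eq_right (by linarith), min_eq_right h]; ring
  · simp [hy, max_eq_right (by linarith : -t ≤ (0:ℝ)), min_eq_right ht]
  · rw [Real.sign_of_pos hy, abs_of_pos hy, one_mul,
      min_eq_right (by linarith : (0:ℝ) ≤ y + t), add_zero]

end SoftThrAux

/-- For `0 < p, q ≤ ∞` and `n < m`, the soft-thresholding operator `P_n` is a continuous
map from `ℓ_p^m` to `ℓ_q^m` (all these quasi-norms induce the product topology on `ℝ^m`). -/
theorem softThr_continuous {m n : ℕ} (hn : 0 < n) (hnm : n < m)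
    (p q : ℝ≥0∞) (hp : 0 < p) (hq : 0 < q) :
    Continuous (softThr n : (Fin m → ℝ) → (Fin m → ℝ)) := by
  have hker : (softThr n : (Fin m → ℝ) → (Fin m → ℝ))
      = fun x i => max (x i - SoftThrAux.kmax n hnm x) 0
        + min (x i + SoftThrAux.kmax n hnm x) 0 := by
    funext x i
    rw [softThr, SoftThrAux.thresh_eq_kmax hnm,
      SoftThrAux.soft_eq _ _ (SoftThrAux.kmax_nonneg hnm x)]
  rw [hker]
  refine continuous_pi fun i => Continuous.add ?_ ?_
  · exact ((continuous_apply i).sub (SoftThrAux.kmax_continuous hnm)).max continuous_const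
  · exact ((continuous_apply i).add (SoftThrAux.kmax_continuous hnm)).min continuous_const
end

section
/- If a linear space L carries two equivalent quasi-norms ‖·‖_X and ‖·‖_Y, W ⊂ L, and τ_n^X(W,Y) > 0, then for all nonnegative integers n, m one has τ_{n+m}^X(W,X) ≤ τ_n^X(W,Y) · τ_m^X(S_Y, X), where S_Y denotes the unit ball of (L, ‖·‖_Y). -/
/-- A quasi-norm on a real vector space `E`. -/
structure QuasiNorm (E : Type*) [AddCommGroup E] [Module ℝ E] where
  toFun : E → ℝ
  nonneg : ∀ x, 0 ≤ toFun x
  eq_zero_iff : ∀ x, toFun x = 0 ↔ x = 0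
  smul_eq : ∀ (a : ℝ) (x : E), toFun (a • x) = |a| * toFun x
  K : ℝ
  one_le_K : 1 ≤ K
  triangle : ∀ x y, toFun (x + y) ≤ K * (toFun x + toFun y)

/-- `Σ_n(Φ)`: linear combinations of at most `n` elements of the family `Φ`. -/
def SigmaN {E : Type*} [AddCommGroup E] [Module ℝ E] (n : ℕ) (Φ : Set E) : Set E :=
  {y | ∃ (c : Fin n → ℝ) (φ : Fin n → E), (∀ j, φ j ∈ Φ) ∧ y = ∑ j, c j • φ j}

/-- Continuity of a map with respect to a quasi-norm on its domain and another
quasi-norm on its codomain (ε-δ form). -/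
def QCont {E : Type*} [AddCommGroup E] [Module ℝ E]
    (NX NY : QuasiNorm E) (S : E → E) : Prop :=
  ∀ x : E, ∀ ε > (0 : ℝ), ∃ δ > (0 : ℝ), ∀ y : E,
    NX.toFun (y - x) < δ → NY.toFun (S y - S x) < ε

/-- The continuous nonlinear width `τ_n^X(W, Y)`: infimum over families `Φ` bounded
in `Y` whose intersection with every finite-dimensional subspace is finite, and over
maps `S` continuous from `(E, N_X)` to `(E, N_Y)` with range in `Σ_n(Φ)`, of the
worst-case `N_Y`-error on `W`. -/
noncomputable def tauQN {E : Type*} [AddCommGroup E] [Module ℝ E]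
    (NX NY : QuasiNorm E) (n : ℕ) (W : Set E) : ℝ :=
  sInf {e : ℝ | ∃ Φ : Set E, (∃ R : ℝ, ∀ y ∈ Φ, NY.toFun y ≤ R) ∧
    (∀ L : Subspace ℝ E, FiniteDimensional ℝ L → (Φ ∩ (L : Set E)).Finite) ∧
    ∃ S : E → E, QCont NX NY S ∧ Set.range S ⊆ SigmaN n Φ ∧
      ∀ f ∈ W, NY.toFun (f - S f) ≤ e}

section Helpers
variable {E : Type*} [AddCommGroup E] [Module ℝ E]

lemma QuasiNorm.zero' (N : QuasiNorm E) : N.toFun 0 = 0 := (N.eq_zero_iff 0).mpr rfl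

lemma QuasiNorm.K_pos (N : QuasiNorm E) : (0:ℝ) < N.K := lt_of_lt_of_le one_pos N.one_le_K

lemma qcont_const (NX NY : QuasiNorm E) (v : E) : QCont NX NY (fun _ => v) := by
  intro x ε hε
  exact ⟨1, one_pos, fun y _ => by simpa [NY.zero'] using hε⟩

lemma qcont_dominate {NX NY NZ : QuasiNorm E} {S : E → E} (h : QCont NX NY S)
    {C : ℝ} (hC : 0 < C) (hle : ∀ u, NZ.toFun u ≤ C * NY.toFun u) :
    QCont NX NZ S := by
  intro x ε hε
  obtain ⟨δ, hδ, hd⟩ := h x (ε / C) (by positivity)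
  refine ⟨δ, hδ, fun y hy => ?_⟩
  calc NZ.toFun (S y - S x) ≤ C * NY.toFun (S y - S x) := hle _
    _ < C * (ε / C) := mul_lt_mul_of_pos_left (hd y hy) hC
    _ = ε := by field_simp

lemma qcont_id (NX : QuasiNorm E) : QCont NX NX (fun x => x) :=
  fun _ ε hε => ⟨ε, hε, fun _ hy => hy⟩

lemma qcont_smul {NX NY : QuasiNorm E} {S : E → E} (h : QCont NX NY S) (a : ℝ) :
    QCont NX NY (fun x => a • S x) := by
  intro x ε hε
  obtain ⟨δ, hδ, hd⟩ := h x (ε / (|a| + 1)) (by positivity)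
  refine ⟨δ, hδ, fun y hy => ?_⟩
  have h1 : a • S y - a • S x = a • (S y - S x) := (smul_sub a _ _).symm
  rw [h1, NY.smul_eq]
  have habs : (0:ℝ) < |a| + 1 := by positivity
  calc |a| * NY.toFun (S y - S x) ≤ (|a| + 1) * NY.toFun (S y - S x) :=
        mul_le_mul_of_nonneg_right (by linarith [abs_nonneg a]) (NY.nonneg _)
    _ < (|a| + 1) * (ε / (|a| + 1)) := mul_lt_mul_of_pos_left (hd y hy) habs
    _ = ε := by field_simp

lemma qcont_add {NX NY : QuasiNorm E} {S T : E → E} (hS : QCont NX NY S)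
    (hT : QCont NX NY T) : QCont NX NY (fun x => S x + T x) := by
  intro x ε hε
  have hK := NY.K_pos
  obtain ⟨δ₁, hδ₁, hd₁⟩ := hS x (ε / (2 * NY.K)) (by positivity)
  obtain ⟨δ₂, hδ₂, hd₂⟩ := hT x (ε / (2 * NY.K)) (by positivity)
  refine ⟨min δ₁ δ₂, lt_min hδ₁ hδ₂, fun y hy => ?_⟩
  have h1 := hd₁ y (lt_of_lt_of_le hy (min_le_left _ _))
  have h2 := hd₂ y (lt_of_lt_of_le hy (min_le_right _ _))
  have heq : S y + T y - (S x + T x) = (S y - S x) + (T y - T x) := by abel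
  rw [heq]
  calc NY.toFun _ ≤ NY.K * (NY.toFun (S y - S x) + NY.toFun (T y - T x)) := NY.triangle _ _
    _ < NY.K * (ε / (2 * NY.K) + ε / (2 * NY.K)) :=
        mul_lt_mul_of_pos_left (by linarith) hK
    _ = ε := by field_simp; ring

lemma qcont_comp {NX NY NZ : QuasiNorm E} {S T : E → E} (hS : QCont NX NY S)
    (hT : QCont NY NZ T) : QCont NX NZ (fun x => T (S x)) := by
  intro x ε hε
  obtain ⟨δ₁, hδ₁, hd₁⟩ := hT (S x) ε hε
  obtain ⟨δ, hδ, hd⟩ := hS x δ₁ hδ₁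
  exact ⟨δ, hδ, fun y hy => hd₁ (S y) (hd y hy)⟩

lemma zero_mem_sigmaN (n : ℕ) (Φ : Set E) (h0 : (0:E) ∈ Φ) : (0:E) ∈ SigmaN n Φ :=
  ⟨fun _ => 0, fun _ => 0, fun _ => h0, by simp⟩

lemma sigmaN_add_smul {n m : ℕ} {Φ₁ Φ₂ : Set E} {y z : E} (a : ℝ)
    (hy : y ∈ SigmaN n Φ₁) (hz : z ∈ SigmaN m Φ₂) :
    y + a • z ∈ SigmaN (n + m) (Φ₁ ∪ (fun w => a • w) '' Φ₂) := by
  obtain ⟨c, φ, hφ, rfl⟩ := hy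
  obtain ⟨d, ψ, hψ, rfl⟩ := hz
  refine ⟨Fin.append c d, Fin.append φ (fun k => a • ψ k), ?_, ?_⟩
  · intro j
    refine Fin.addCases (fun i => ?_) (fun i => ?_) j
    · rw [Fin.append_left]; exact Or.inl (hφ i)
    · rw [Fin.append_right]; exact Or.inr ⟨ψ i, hψ i, rfl⟩
  · rw [Fin.sum_univ_add]
    simp only [Fin.append_left, Fin.append_right]
    rw [Finset.smul_sum]
    congr 1
    refine Finset.sum_congr rfl (fun i _ => ?_)
    rw [smul_smul, smul_smul, mul_comm]

end Helpers

/-- If a linear space carries two equivalent quasi-norms `N_X`, `N_Y`, `W ⊆ E`, and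
`τ_n^X(W,Y) > 0`, then `τ_{n+m}^X(W,X) ≤ τ_n^X(W,Y) · τ_m^X(S_Y,X)`,
where `S_Y` is the unit ball of `N_Y`. -/
theorem tau_submultiplicative {E : Type*} [AddCommGroup E] [Module ℝ E]
    (NX NY : QuasiNorm E)
    (hequiv : ∃ c C : ℝ, 0 < c ∧ 0 < C ∧
      ∀ x, c * NX.toFun x ≤ NY.toFun x ∧ NY.toFun x ≤ C * NX.toFun x)
    (W : Set E) (n m : ℕ) (hpos : 0 < tauQN NX NY n W) :
    tauQN NX NX (n + m) W ≤ tauQN NX NY n W * tauQN NX NX m {x | NY.toFun x ≤ 1} := by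
  obtain ⟨c, C, hc, hC, hcC⟩ := hequiv
  set B : Set E := {x | NY.toFun x ≤ 1} with hB
  set A₁ : Set ℝ := {e : ℝ | ∃ Φ : Set E, (∃ R : ℝ, ∀ y ∈ Φ, NY.toFun y ≤ R) ∧
    (∀ L : Subspace ℝ E, FiniteDimensional ℝ L → (Φ ∩ (L : Set E)).Finite) ∧
    ∃ S : E → E, QCont NX NY S ∧ Set.range S ⊆ SigmaN n Φ ∧
      ∀ f ∈ W, NY.toFun (f - S f) ≤ e} with hA₁def
  set A₂ : Set ℝ := {e : ℝ | ∃ Φ : Set E, (∃ R : ℝ, ∀ y ∈ Φ, NX.toFun y ≤ R) ∧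
    (∀ L : Subspace ℝ E, FiniteDimensional ℝ L → (Φ ∩ (L : Set E)).Finite) ∧
    ∃ S : E → E, QCont NX NX S ∧ Set.range S ⊆ SigmaN m Φ ∧
      ∀ f ∈ B, NX.toFun (f - S f) ≤ e} with hA₂def
  set A : Set ℝ := {e : ℝ | ∃ Φ : Set E, (∃ R : ℝ, ∀ y ∈ Φ, NX.toFun y ≤ R) ∧
    (∀ L : Subspace ℝ E, FiniteDimensional ℝ L → (Φ ∩ (L : Set E)).Finite) ∧
    ∃ S : E → E, QCont NX NX S ∧ Set.range S ⊆ SigmaN (n + m) Φ ∧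
      ∀ f ∈ W, NX.toFun (f - S f) ≤ e} with hAdef
  have hτ₁ : tauQN NX NY n W = sInf A₁ := rfl
  have hτ₂ : tauQN NX NX m B = sInf A₂ := rfl
  have hτ : tauQN NX NX (n + m) W = sInf A := rfl
  -- domination: NX u ≤ c⁻¹ * NY u
  have hXY : ∀ u, NX.toFun u ≤ c⁻¹ * NY.toFun u := by
    intro u
    have h1 := (hcC u).1
    calc NX.toFun u = c⁻¹ * (c * NX.toFun u) := by field_simp
      _ ≤ c⁻¹ * NY.toFun u := mul_le_mul_of_nonneg_left h1 (by positivity)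
  -- W is nonempty
  have hWne : W.Nonempty := by
    by_contra hW
    rw [Set.not_nonempty_iff_eq_empty] at hW
    have huniv : A₁ = Set.univ := by
      refine Set.eq_univ_of_forall (fun e => ?_)
      refine ⟨{0}, ⟨0, fun y hy => by simp at hy; simp [hy, NY.zero']⟩,
        fun L _ => (Set.finite_singleton 0).subset Set.inter_subset_left,
        fun _ => 0, qcont_const NX NY 0, ?_, fun f hf => by simp [hW] at hf⟩
      rintro y ⟨f, rfl⟩
      exact zero_mem_sigmaN n {0} rfl
    rw [hτ₁, huniv] at hpos
    have : ¬ BddBelow (Set.univ : Set ℝ) := by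
      rw [not_bddBelow_iff]
      intro x; exact ⟨x - 1, Set.mem_univ _, by linarith⟩
    rw [Real.sInf_of_not_bddBelow this] at hpos
    exact lt_irrefl 0 hpos
  obtain ⟨f₀, hf₀⟩ := hWne
  -- A₁ is nonempty and bounded below
  have hA₁ne : A₁.Nonempty := by
    by_contra h
    rw [Set.not_nonempty_iff_eq_empty] at h
    rw [hτ₁, h, Real.sInf_empty] at hpos
    exact lt_irrefl 0 hpos
  have hA₁bdd : BddBelow A₁ := by
    refine ⟨0, fun e he => ?_⟩
    obtain ⟨Φ, _, _, S, _, _, herr⟩ := he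
    exact le_trans (NY.nonneg _) (herr f₀ hf₀)
  -- A₂ is nonempty
  have hA₂ne : A₂.Nonempty := by
    refine ⟨c⁻¹, {0}, ⟨0, fun y hy => by simp at hy; simp [hy, NX.zero']⟩,
      fun L _ => (Set.finite_singleton 0).subset Set.inter_subset_left,
      fun _ => 0, qcont_const NX NX 0, ?_, fun f hf => ?_⟩
    · rintro y ⟨f, rfl⟩
      exact zero_mem_sigmaN m {0} rfl
    · simp only [sub_zero]
      calc NX.toFun f ≤ c⁻¹ * NY.toFun f := hXY f
        _ ≤ c⁻¹ * 1 := mul_le_mul_of_nonneg_left hf (by positivity)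
        _ = c⁻¹ := mul_one _
  -- key step: combined scheme
  have key : ∀ e₁ ∈ A₁, ∀ e₂ ∈ A₂, sInf A ≤ e₁ * e₂ := by
    intro e₁ he₁ e₂ he₂
    have he₁pos : 0 < e₁ := lt_of_lt_of_le hpos (by rw [hτ₁]; exact csInf_le hA₁bdd he₁)
    have he₁ne : e₁ ≠ 0 := ne_of_gt he₁pos
    obtain ⟨Φ₁, ⟨R₁, hR₁⟩, hfin₁, S₁, hS₁c, hS₁r, hS₁e⟩ := he₁
    obtain ⟨Φ₂, ⟨R₂, hR₂⟩, hfin₂, S₂, hS₂c, hS₂r, hS₂e⟩ := he₂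
    set g : E → E := fun f => e₁⁻¹ • (f - S₁ f) with hg
    set S : E → E := fun f => S₁ f + e₁ • S₂ (g f) with hS
    set Φ : Set E := Φ₁ ∪ (fun w => e₁ • w) '' Φ₂ with hΦ
    -- continuity
    have hS₁X : QCont NX NX S₁ := qcont_dominate hS₁c (by positivity : (0:ℝ) < c⁻¹) hXY
    have hsub : QCont NX NX (fun f => f - S₁ f) := by
      have heq : (fun f : E => f - S₁ f) = (fun f : E => f + (-1 : ℝ) • S₁ f) := by
        funext f; rw [neg_one_smul, sub_eq_add_neg]
      rw [heq]
      exact qcont_add (qcont_id NX) (qcont_smul hS₁X (-1))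
    have hgc : QCont NX NX g := qcont_smul hsub e₁⁻¹
    have hScont : QCont NX NX S :=
      qcont_add hS₁X (qcont_smul (qcont_comp hgc hS₂c) e₁)
    -- membership of e₁ * e₂ in A
    have hmem : e₁ * e₂ ∈ A := by
      refine ⟨Φ, ⟨max (c⁻¹ * R₁) (e₁ * R₂), ?_⟩, ?_, S, hScont, ?_, ?_⟩
      · rintro y (hy | ⟨w, hw, rfl⟩)
        · refine le_trans ?_ (le_max_left _ _)
          calc NX.toFun y ≤ c⁻¹ * NY.toFun y := hXY y
            _ ≤ c⁻¹ * R₁ := mul_le_mul_of_nonneg_left (hR₁ y hy) (by positivity)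
        · refine le_trans ?_ (le_max_right _ _)
          rw [NX.smul_eq, abs_of_pos he₁pos]
          exact mul_le_mul_of_nonneg_left (hR₂ w hw) (le_of_lt he₁pos)
      · intro L hL
        rw [hΦ, Set.union_inter_distrib_right]
        refine Set.Finite.union (hfin₁ L hL) ?_
        refine Set.Finite.subset ((hfin₂ L hL).image (fun w => e₁ • w)) ?_
        rintro x ⟨⟨w, hw, rfl⟩, hxL⟩
        refine ⟨w, ⟨hw, ?_⟩, rfl⟩
        have : e₁⁻¹ • (e₁ • w) ∈ L := L.smul_mem e₁⁻¹ hxL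
        rwa [smul_smul, inv_mul_cancel₀ he₁ne, one_smul] at this
      · rintro y ⟨f, rfl⟩
        exact sigmaN_add_smul e₁ (hS₁r ⟨f, rfl⟩) (hS₂r ⟨g f, rfl⟩)
      · intro f hf
        have hgB : g f ∈ B := by
          rw [hB]
          show NY.toFun (g f) ≤ 1
          rw [hg]
          show NY.toFun (e₁⁻¹ • (f - S₁ f)) ≤ 1
          rw [NY.smul_eq, abs_of_pos (by positivity : (0:ℝ) < e₁⁻¹)]
          calc e₁⁻¹ * NY.toFun (f - S₁ f) ≤ e₁⁻¹ * e₁ :=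
                mul_le_mul_of_nonneg_left (hS₁e f hf) (by positivity)
            _ = 1 := inv_mul_cancel₀ he₁ne
        have hrepr : f - S f = e₁ • (g f - S₂ (g f)) := by
          rw [hS]
          show f - (S₁ f + e₁ • S₂ (g f)) = e₁ • (g f - S₂ (g f))
          rw [smul_sub, hg]
          show f - (S₁ f + e₁ • S₂ (g f)) = e₁ • (e₁⁻¹ • (f - S₁ f)) - e₁ • S₂ (g f)
          rw [smul_smul, mul_inv_cancel₀ he₁ne, one_smul]
          abel
        rw [hrepr, NX.smul_eq, abs_of_pos he₁pos]
        exact mul_le_mul_of_nonneg_left (hS₂e (g f) hgB) (le_of_lt he₁pos)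
    have hAbdd : BddBelow A := by
      refine ⟨0, fun e he => ?_⟩
      obtain ⟨Φ', _, _, S', _, _, herr⟩ := he
      exact le_trans (NX.nonneg _) (herr f₀ hf₀)
    exact csInf_le hAbdd hmem
  -- conclude
  have hτ₂nonneg : 0 ≤ sInf A₂ := by
    refine le_csInf hA₂ne (fun e he => ?_)
    obtain ⟨Φ', _, _, S', _, _, herr⟩ := he
    exact le_trans (NX.nonneg _) (herr 0 (by simp [hB, NY.zero']))
  have step1 : ∀ e₁ ∈ A₁, sInf A ≤ e₁ * sInf A₂ := by
    intro e₁ he₁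
    have he₁pos : 0 < e₁ := lt_of_lt_of_le hpos (by rw [hτ₁]; exact csInf_le hA₁bdd he₁)
    have h2 : sInf A / e₁ ≤ sInf A₂ := by
      refine le_csInf hA₂ne (fun e₂ he₂ => ?_)
      rw [div_le_iff₀ he₁pos]
      calc sInf A ≤ e₁ * e₂ := key e₁ he₁ e₂ he₂
        _ = e₂ * e₁ := mul_comm _ _
    calc sInf A = (sInf A / e₁) * e₁ := by field_simp
      _ ≤ sInf A₂ * e₁ := mul_le_mul_of_nonneg_right h2 (le_of_lt he₁pos)
      _ = e₁ * sInf A₂ := mul_comm _ _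
  rw [hτ, hτ₁, hτ₂]
  rcases eq_or_lt_of_le hτ₂nonneg with h0 | hτ₂pos
  · obtain ⟨e₁, he₁⟩ := hA₁ne
    calc sInf A ≤ e₁ * sInf A₂ := step1 e₁ he₁
      _ = 0 := by rw [← h0, mul_zero]
      _ = sInf A₁ * sInf A₂ := by rw [← h0, mul_zero]
  · have h3 : sInf A / sInf A₂ ≤ sInf A₁ := by
      refine le_csInf hA₁ne (fun e₁ he₁ => ?_)
      rw [div_le_iff₀ hτ₂pos]
      exact step1 e₁ he₁
    calc sInf A = (sInf A / sInf A₂) * sInf A₂ := by field_simp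
      _ ≤ sInf A₁ * sInf A₂ := mul_le_mul_of_nonneg_right h3 (le_of_lt hτ₂pos)
end

section
/- Under the soft-thresholding map, the approximant stays ℓ_q-close continuously: for 0 < p, q ≤ ∞ and n < m, the map x ↦ x − P_n(x) from ℓ_p^m to ℓ_q^m is continuous, where P_n is the soft-thresholding n-term operator. -/
open Classical ENNReal

lemma thresh_set_nonempty {m : ℕ} (n : ℕ) (x : Fin m → ℝ) :
    {t : ℝ | 0 ≤ t ∧ (Finset.univ.filter fun i => t < |x i|).card ≤ n}.Nonempty := by
  refine ⟨∑ i, |x i|, Finset.sum_nonneg fun i _ => abs_nonneg _, ?_⟩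
  have : (Finset.univ.filter fun i => (∑ i, |x i|) < |x i|) = ∅ := by
    apply Finset.filter_false_of_mem
    intro i _
    have : |x i| ≤ ∑ i, |x i| :=
      Finset.single_le_sum (fun j _ => abs_nonneg (x j)) (Finset.mem_univ i)
    linarith
  simp [this]

lemma thresh_set_bddBelow {m : ℕ} (n : ℕ) (x : Fin m → ℝ) :
    BddBelow {t : ℝ | 0 ≤ t ∧ (Finset.univ.filter fun i => t < |x i|).card ≤ n} :=
  ⟨0, fun _ ht => ht.1⟩

lemma thresh_nonneg {m : ℕ} (n : ℕ) (x : Fin m → ℝ) : 0 ≤ thresh n x :=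
  le_csInf (thresh_set_nonempty n x) fun _ ht => ht.1

lemma thresh_le_add {m : ℕ} (n : ℕ) (x y : Fin m → ℝ) :
    thresh n y ≤ thresh n x + dist x y := by
  have key : ∀ t ∈ {t : ℝ | 0 ≤ t ∧ (Finset.univ.filter fun i => t < |x i|).card ≤ n},
      thresh n y ≤ t + dist x y := by
    intro t ht
    apply csInf_le (thresh_set_bddBelow n y)
    constructor
    · exact add_nonneg ht.1 dist_nonneg
    · refine le_trans (Finset.card_le_card ?_) ht.2
      intro i hi
      simp only [Finset.mem_filter, Finset.mem_univ, true_and] at hi ⊢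
      have h1 : dist (y i) (x i) ≤ dist x y := by
        rw [dist_comm x y]; exact dist_le_pi_dist y x i
      have h2 : |y i| ≤ |x i| + dist x y := by
        have := abs_sub_abs_le_abs_sub (y i) (x i)
        rw [Real.dist_eq] at h1
        linarith
      linarith
  have : thresh n y - dist x y ≤ thresh n x := by
    apply le_csInf (thresh_set_nonempty n x)
    intro t ht
    linarith [key t ht]
  linarith

lemma continuous_thresh {m : ℕ} (n : ℕ) : Continuous (thresh (m := m) n) := by
  have : LipschitzWith 1 (thresh (m := m) n) := by
    apply LipschitzWith.of_dist_le_mul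
    intro x y
    rw [NNReal.coe_one, one_mul, Real.dist_eq, abs_sub_le_iff]
    constructor
    · have := thresh_le_add n y x
      rw [dist_comm y x] at this
      linarith
    · linarith [thresh_le_add n x y]
  exact this.continuous

lemma clamp_eq (a t : ℝ) (ht : 0 ≤ t) :
    a - Real.sign a * max (|a| - t) 0 = max (-t) (min a t) := by
  rcases lt_trichotomy a 0 with h | h | h
  · rw [Real.sign_of_neg h, abs_of_neg h]
    rcases le_total (-a) t with h2 | h2
    · rw [max_eq_right (by linarith), min_eq_left (by linarith),
        max_eq_right (by linarith)]
      ring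
    · rw [max_eq_left (by linarith), min_eq_left (by linarith),
        max_eq_left (by linarith)]
      ring
  · simp [h, max_eq_right ht, ht]
  · rw [Real.sign_of_pos h, abs_of_pos h]
    rcases le_total a t with h2 | h2
    · rw [max_eq_right (by linarith), min_eq_left h2,
        max_eq_right (by linarith)]
      ring
    · rw [max_eq_left (by linarith), min_eq_right h2,
        max_eq_right (by linarith)]
      ring

/-- For `0 < p, q ≤ ∞` and `n < m`, the residual map `x ↦ x - P_n(x)` of soft
thresholding is continuous from `ℓ_p^m` to `ℓ_q^m` (all these quasi-norms induce the
product topology on `ℝ^m`). -/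
theorem residual_softThr_continuous {m n : ℕ} (hn : 0 < n) (hnm : n < m)
    (p q : ℝ≥0∞) (hp : 0 < p) (hq : 0 < q) :
    Continuous (fun x : Fin m → ℝ => x - softThr n x) := by
  have heq : (fun x : Fin m → ℝ => x - softThr n x)
      = fun x i => max (-(thresh n x)) (min (x i) (thresh n x)) := by
    funext x i
    simp only [Pi.sub_apply, softThr]
    exact clamp_eq (x i) (thresh n x) (thresh_nonneg n x)
  rw [heq]
  apply continuous_pi
  intro i
  exact ((continuous_thresh n).neg).max ((continuous_apply i).min (continuous_thresh n))
end

section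
/- If B is an n-dimensional linear space of real-valued functions on a set Ω, then the pseudo-dimension of B equals n. -/
set_option maxHeartbeats 1000000

/-- `B` pseudo-shatters `n` points: there are points `a^1, …, a^n ∈ Ω` and shifts
`b ∈ ℝ^n` such that the functions of `B` realize all `2^n` sign patterns of
`(f(a^1) + b_1, …, f(a^n) + b_n)` (with `sgn t = 1` for `t > 0`, `-1` otherwise). -/
def PShatters {Ω : Type*} (B : Set (Ω → ℝ)) (n : ℕ) : Prop :=
  ∃ (a : Fin n → Ω) (b : Fin n → ℝ), ∀ ε : Fin n → Bool,
    ∃ f ∈ B, ∀ i : Fin n, (0 < f (a i) + b i ↔ ε i = true)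

/-- There exist `n` points such that evaluation at them is injective on `B`. -/
lemma exists_sep_points : ∀ (n : ℕ) {Ω : Type*} (B : Subspace ℝ (Ω → ℝ))
    [FiniteDimensional ℝ B], Module.finrank ℝ B = n →
    ∃ a : Fin n → Ω, ∀ f ∈ B, (∀ i, f (a i) = 0) → f = 0 := by
  intro n
  induction n with
  | zero =>
    intro Ω B _ h
    refine ⟨Fin.elim0, fun f hf _ => ?_⟩
    have : B = ⊥ := Submodule.finrank_eq_zero.mp h
    simpa [this] using hf
  | succ n ih =>
    intro Ω B _ h
    have hB : B ≠ ⊥ := by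
      intro hb
      rw [hb, finrank_bot] at h
      omega
    obtain ⟨f0, hf0B, hf0⟩ := Submodule.ne_bot_iff B |>.mp hB
    obtain ⟨ω, hω⟩ := Function.ne_iff.mp hf0
    simp only [Pi.zero_apply] at hω
    set δ : (Ω → ℝ) →ₗ[ℝ] ℝ := LinearMap.proj (R := ℝ) (φ := fun _ : Ω => ℝ) ω with hδ
    set K : Submodule ℝ B := LinearMap.ker (δ.comp B.subtype) with hK
    set B' : Subspace ℝ (Ω → ℝ) := K.map B.subtype with hB'
    have hsurj : Function.Surjective (δ.comp B.subtype) := by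
      intro r
      refine ⟨(r / f0 ω) • ⟨f0, hf0B⟩, ?_⟩
      simp [δ]
      field_simp
    have hrange : LinearMap.range (δ.comp B.subtype) = ⊤ :=
      LinearMap.range_eq_top.mpr hsurj
    have hKrank : Module.finrank ℝ K = n := by
      have := LinearMap.finrank_range_add_finrank_ker (δ.comp B.subtype)
      rw [hrange, finrank_top, h, Module.finrank_self] at this
      rw [hK]
      omega
    have hB'rank : Module.finrank ℝ B' = n := by
      rw [hB', Submodule.finrank_map_subtype_eq]; exact hKrank
    obtain ⟨a', ha'⟩ := ih B' hB'rank
    refine ⟨Fin.cons ω a', fun f hf hzero => ?_⟩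
    have hfω : f ω = 0 := by simpa using hzero 0
    have hfB' : f ∈ B' := ⟨⟨f, hf⟩, by simpa [hK, δ] using hfω, rfl⟩
    exact ha' f hfB' (fun i => by simpa using hzero i.succ)

/-- If `B` is an `n`-dimensional linear space of real-valued functions on a set `Ω`,
then the pseudo-dimension of `B` equals `n`: `B` pseudo-shatters `n` points but no
larger number of points. -/
theorem pseudoDim_of_linear_space {Ω : Type*} (n : ℕ) (B : Subspace ℝ (Ω → ℝ))
    [FiniteDimensional ℝ B] (hB : Module.finrank ℝ B = n) :
    PShatters (B : Set (Ω → ℝ)) n ∧ ∀ k : ℕ, n < k → ¬ PShatters (B : Set (Ω → ℝ)) k := by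
  constructor
  · -- lower bound
    obtain ⟨a, ha⟩ := exists_sep_points n B hB
    set L : B →ₗ[ℝ] (Fin n → ℝ) :=
      LinearMap.pi fun i => (LinearMap.proj (R := ℝ) (φ := fun _ : Ω => ℝ) (a i)).comp B.subtype
      with hL
    have hker : LinearMap.ker L = ⊥ := by
      rw [LinearMap.ker_eq_bot']
      rintro ⟨f, hf⟩ hLf
      have : ∀ i, f (a i) = 0 := fun i => congrFun hLf i
      exact Subtype.ext (ha f hf this)
    have hrange : LinearMap.range L = ⊤ := by
      apply Submodule.eq_top_of_finrank_eq
      have h1 := LinearMap.finrank_range_add_finrank_ker L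
      rw [hker, finrank_bot, hB] at h1
      rw [Module.finrank_fin_fun]
      omega
    refine ⟨a, 0, fun ε => ?_⟩
    obtain ⟨⟨f, hfB⟩, hfv⟩ := LinearMap.range_eq_top.mp hrange (fun i => if ε i then 1 else -1)
    refine ⟨f, hfB, fun i => ?_⟩
    have hfi : f (a i) = if ε i then 1 else -1 := congrFun hfv i
    cases hε : ε i <;> simp [hfi, hε]
  · -- upper bound
    rintro k hk ⟨a, b, hsh⟩
    set L : B →ₗ[ℝ] (Fin k → ℝ) :=
      LinearMap.pi fun i => (LinearMap.proj (R := ℝ) (φ := fun _ : Ω => ℝ) (a i)).comp B.subtype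
      with hL
    have hlt : LinearMap.range L < ⊤ := by
      rw [lt_top_iff_ne_top]
      intro htop
      have h1 : Module.finrank ℝ (LinearMap.range L) ≤ n := hB ▸ LinearMap.finrank_range_le L
      rw [htop, finrank_top, Module.finrank_fin_fun] at h1
      omega
    obtain ⟨φ, hφ0, hφ⟩ :=
      (LinearMap.range L).exists_dual_map_eq_bot_of_lt_top hlt inferInstance
    set c : Fin k → ℝ := fun i => φ (Pi.single i 1) with hc
    have hφval : ∀ v : Fin k → ℝ, φ v = ∑ i, v i * c i := by
      intro v
      conv_lhs => rw [pi_eq_sum_univ v]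
      rw [map_sum]
      refine Finset.sum_congr rfl fun i _ => ?_
      rw [map_smul, smul_eq_mul]
      congr 2
      ext j
      simp [Pi.single_apply, eq_comm]
    have hcne : ∃ j, c j ≠ 0 := by
      by_contra hall
      push_neg at hall
      apply hφ0
      ext v
      exact hall v
    have key : ∀ f ∈ B, ∑ i, c i * (f (a i) + b i) = ∑ i, c i * b i := by
      intro f hf
      have h0 : φ (L ⟨f, hf⟩) = 0 := by
        have hmem : φ (L ⟨f, hf⟩) ∈ (LinearMap.range L).map φ :=
          ⟨L ⟨f, hf⟩, ⟨⟨f, hf⟩, rfl⟩, rfl⟩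
        rw [hφ] at hmem
        simpa using hmem
      have h1 : ∑ i, f (a i) * c i = 0 := by
        rw [hφval (L ⟨f, hf⟩)] at h0
        simpa [hL] using h0
      have : ∑ i, c i * (f (a i) + b i) = (∑ i, f (a i) * c i) + ∑ i, c i * b i := by
        rw [← Finset.sum_add_distrib]
        exact Finset.sum_congr rfl fun i _ => by ring
      rw [this, h1, zero_add]
    obtain ⟨f, hfB, hf⟩ := hsh (fun i => decide (0 < c i))
    obtain ⟨g, hgB, hg⟩ := hsh (fun i => decide (c i < 0))
    simp only [decide_eq_true_eq] at hf hg
    have hfpos : ∀ i ∈ Finset.univ, (0:ℝ) ≤ c i * (f (a i) + b i) := by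
      intro i _
      rcases lt_trichotomy (c i) 0 with h | h | h
      · have : ¬ 0 < f (a i) + b i := fun hp => absurd ((hf i).mp hp) (by linarith)
        nlinarith
      · simp [h]
      · have := (hf i).mpr h
        nlinarith
    have hgneg : ∀ i ∈ Finset.univ, (0:ℝ) ≤ -(c i * (g (a i) + b i)) := by
      intro i _
      rcases lt_trichotomy (c i) 0 with h | h | h
      · have := (hg i).mpr h
        nlinarith
      · simp [h]
      · have : ¬ 0 < g (a i) + b i := fun hp => absurd ((hg i).mp hp) (by linarith)
        nlinarith
    obtain ⟨j, hj⟩ := hcne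
    rcases hj.lt_or_gt with hjneg | hjpos
    · -- c j < 0 : sum over g is strictly negative
      have hterm : 0 < -(c j * (g (a j) + b j)) := by
        have := (hg j).mpr hjneg
        nlinarith
      have hlt2 : 0 < ∑ i, -(c i * (g (a i) + b i)) :=
        Finset.sum_pos' hgneg ⟨j, Finset.mem_univ j, hterm⟩
      have hge : 0 ≤ ∑ i, c i * (f (a i) + b i) := Finset.sum_nonneg hfpos
      rw [key f hfB] at hge
      rw [Finset.sum_neg_distrib] at hlt2
      rw [key g hgB] at hlt2
      linarith
    · -- 0 < c j : sum over f is strictly positive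
      have hterm : 0 < c j * (f (a j) + b j) := by
        have := (hf j).mpr hjpos
        nlinarith
      have hlt2 : 0 < ∑ i, c i * (f (a i) + b i) :=
        Finset.sum_pos' hfpos ⟨j, Finset.mem_univ j, hterm⟩
      have hle : 0 ≤ ∑ i, -(c i * (g (a i) + b i)) := Finset.sum_nonneg hgneg
      rw [Finset.sum_neg_distrib] at hle
      rw [key f hfB] at hlt2
      rw [key g hgB] at hle
      linarith
end
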